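/- Let t ∈ ℂ with t ≠ 0 and Re(t) ≥ 0. Then there exists z ∈ 𝔻 with −t·z + 2 + t ≠ 0 and φ_t(z) = 0 if and only if Re(t) < 1. -/

import Mathlib

/-- The parabolic-type linear-fractional map `φ_t(z) = ((2-t)z + t)/(-tz + 2 + t)`. -/
noncomputable def phiPara (t z : ℂ) : ℂ := ((2 - t) * z + t) / (-t * z + 2 + t)

/-- For `t ≠ 0` with `Re t ≥ 0`, the map `φ_t` vanishes at some point of the unit
disk if and only if `Re t < 1`. -/
theorem phiPara_vanishes_iff (t : ℂ) (ht0 : t ≠ 0) (ht : 0 ≤ t.re) :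
    (∃ z : ℂ, ‖z‖ < 1 ∧ -t * z + 2 + t ≠ 0 ∧ phiPara t z = 0) ↔ t.re < 1 := by
  constructor
  · rintro ⟨z, hz, hden, hphi⟩
    have hnum : (2 - t) * z + t = 0 := by
      rcases div_eq_zero_iff.mp hphi with h | h
      · exact h
      · exact absurd h hden
    have ht2 : t ≠ 2 := by
      rintro rfl
      simp at hnum
    have heq : t = (t - 2) * z := by linear_combination hnum
    have habs : ‖t‖ < ‖t - 2‖ := by
      have h2 : ‖t - 2‖ ≠ 0 := by
        simpa [sub_eq_zero] using ht2
      have habs0 : ‖t‖ = ‖t - 2‖ * ‖z‖ := by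
        have h := congrArg (‖·‖) heq
        rwa [norm_mul] at h
      calc ‖t‖ = ‖t - 2‖ * ‖z‖ := habs0
        _ < ‖t - 2‖ * 1 := by
            exact mul_lt_mul_of_pos_left hz (lt_of_le_of_ne (by positivity) (Ne.symm h2))
        _ = ‖t - 2‖ := mul_one _
    have hsq : ‖t‖ ^ 2 < ‖t - 2‖ ^ 2 := by
      exact pow_lt_pow_left₀ habs (by positivity) (by norm_num)
    rw [Complex.sq_norm, Complex.sq_norm, Complex.normSq_apply, Complex.normSq_apply] at hsq
    simp only [Complex.sub_re, Complex.sub_im] at hsq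
    norm_num at hsq
    nlinarith [hsq]
  · intro hre
    have ht2 : t - 2 ≠ 0 := by
      intro h
      have : t = 2 := by linear_combination h
      rw [this] at hre; norm_num at hre
    refine ⟨t / (t - 2), ?_, ?_, ?_⟩
    · rw [norm_div, div_lt_one (norm_pos_iff.mpr ht2)]
      · have : Complex.normSq t < Complex.normSq (t - 2) := by
          rw [Complex.normSq_apply, Complex.normSq_apply]
          simp only [Complex.sub_re, Complex.sub_im]
          norm_num
          nlinarith
        have h1 := Complex.sq_norm t
        have h2 := Complex.sq_norm (t - 2)
        nlinarith [norm_nonneg t, norm_nonneg (t - 2)]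
    · have : -t * (t / (t - 2)) + 2 + t = -4 / (t - 2) := by
        field_simp
        ring
      rw [this]
      simp [ht2]
    · unfold phiPara
      have hnum : (2 - t) * (t / (t - 2)) + t = 0 := by
        field_simp
        ring
      rw [hnum, zero_div]
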